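/- Let a, b be integers with 0 ≤ b ≤ a − 3 and let β be the unique real root greater than 1 of the polynomial P(X) = X^3 − aX^2 + bX + 1. Then L_⊕(β) ≥ 2; more precisely, there exist x, y ∈ ℤ_β with x + y ∈ fin(β) but β·(x + y) ∉ ℤ_β. -/

import Mathlib

open Polynomial

/-- The β-transformation `T_β(x) = βx - ⌊βx⌋`. -/
noncomputable def betaT (β : ℝ) : ℝ → ℝ := fun x => β * x - ⌊β * x⌋

/-- `fin(β)`: reals `x` such that `|x|/β^N ∈ [0,1)` and the greedy expansion of
`|x|/β^N` is finite, for some `N, n ∈ ℕ`. -/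
def finBeta (β : ℝ) : Set ℝ :=
  {x | ∃ N n : ℕ, |x| / β ^ N ∈ Set.Ico (0 : ℝ) 1 ∧ (betaT β)^[n] (|x| / β ^ N) = 0}

/-- `ℤ_β`: the set of β-integers. -/
def betaInt (β : ℝ) : Set ℝ :=
  {x | ∃ N : ℕ, |x| / β ^ N ∈ Set.Ico (0 : ℝ) 1 ∧ (betaT β)^[N] (|x| / β ^ N) = 0}

/-- `L_⊕(β)`: the least `L ∈ ℕ` such that `β^L·(x+y) ∈ ℤ_β` for all
`x, y ∈ ℤ_β` with `x + y ∈ fin(β)`. -/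
noncomputable def Lplus (β : ℝ) : ℕ :=
  sInf {L : ℕ | ∀ x ∈ betaInt β, ∀ y ∈ betaInt β,
    x + y ∈ finBeta β → β ^ L * (x + y) ∈ betaInt β}

/-- `L_⊗(β)`: the least `L ∈ ℕ` such that `β^L·(x·y) ∈ ℤ_β` for all
`x, y ∈ ℤ_β` with `x·y ∈ fin(β)`. -/
noncomputable def Lmul (β : ℝ) : ℕ :=
  sInf {L : ℕ | ∀ x ∈ betaInt β, ∀ y ∈ betaInt β,
    x * y ∈ finBeta β → β ^ L * (x * y) ∈ betaInt β}


-- ===== auxiliary development =====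

-- basic lemmas
lemma betaT_mem (β x : ℝ) : betaT β x ∈ Set.Ico (0:ℝ) 1 := by
  have h : betaT β x = Int.fract (β * x) := rfl
  rw [h]
  exact ⟨Int.fract_nonneg _, Int.fract_lt_one _⟩

lemma betaT_zero (β : ℝ) : betaT β 0 = 0 := by simp [betaT]

lemma iterT_zero (β : ℝ) (k : ℕ) : (betaT β)^[k] 0 = 0 :=
  Function.iterate_fixed (betaT_zero β) k

lemma iterT_mem (β : ℝ) {u : ℝ} (hu : u ∈ Set.Ico (0:ℝ) 1) (k : ℕ) :
    (betaT β)^[k] u ∈ Set.Ico (0:ℝ) 1 := by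
  cases k with
  | zero => exact hu
  | succ m => rw [Function.iterate_succ_apply']; exact betaT_mem β _

lemma T_shift (β : ℝ) (hβ : 1 < β) {v : ℝ} (hv : v ∈ Set.Ico (0:ℝ) 1) (m : ℕ) :
    (betaT β)^[m] (v / β ^ m) = v := by
  induction m with
  | zero => simp
  | succ m ih =>
    rw [Function.iterate_succ_apply]
    have hβ0 : (0:ℝ) < β := lt_trans one_pos hβ
    have hpow : (0:ℝ) < β ^ m := pow_pos hβ0 m
    have h1 : (1:ℝ) ≤ β ^ m := one_le_pow₀ hβ.le
    have hmem : v / β ^ m ∈ Set.Ico (0:ℝ) 1 :=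
      ⟨div_nonneg hv.1 hpow.le, lt_of_le_of_lt (div_le_self hv.1 h1) hv.2⟩
    have : betaT β (v / β ^ (m+1)) = v / β ^ m := by
      have hfl : ⌊v / β ^ m⌋ = 0 := Int.floor_eq_zero_iff.mpr (by exact ⟨hmem.1, hmem.2⟩)
      simp only [betaT]
      rw [show β * (v / β ^ (m+1)) = v / β ^ m by field_simp; ring]
      rw [hfl]; simp
    rw [this, ih]

lemma not_mem_betaInt (β : ℝ) (hβ : 1 < β) (w : ℝ) (N₀ : ℕ) (hwpos : 0 < w)
    (h1 : β ^ N₀ ≤ β * w) (h2 : w < β ^ N₀)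
    (h3 : (betaT β)^[N₀] (w / β ^ N₀) ≠ 0) : w ∉ betaInt β := by
  rintro ⟨N, hIco, hT⟩
  have hβ0 : (0:ℝ) < β := lt_trans one_pos hβ
  have habs : |w| = w := abs_of_pos hwpos
  rw [habs] at hIco hT
  rcases lt_or_ge N N₀ with hN | hN
  · -- β^N ≤ w, so w / β^N ≥ 1
    have hNN : N + 1 ≤ N₀ := hN
    have : β ^ (N+1) ≤ β ^ N₀ := pow_le_pow_right₀ hβ.le hNN
    have hle : β ^ N ≤ w := by
      have := le_trans this h1
      rw [pow_succ] at this
      nlinarith [pow_pos hβ0 N]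
    have : (1:ℝ) ≤ w / β ^ N := (one_le_div (pow_pos hβ0 N)).mpr hle
    exact absurd hIco.2 (not_lt.mpr this)
  · -- N₀ ≤ N
    have hmem : w / β ^ N₀ ∈ Set.Ico (0:ℝ) 1 :=
      ⟨div_nonneg hwpos.le (pow_pos hβ0 N₀).le, (div_lt_one (pow_pos hβ0 N₀)).mpr h2⟩
    obtain ⟨m, rfl⟩ : ∃ m, N = N₀ + m := ⟨N - N₀, by omega⟩
    have hw : w / β ^ (N₀ + m) = (w / β ^ N₀) / β ^ m := by
      rw [div_div, ← pow_add]
    rw [hw, Function.iterate_add_apply, T_shift β hβ hmem] at hT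
    exact h3 hT

lemma betaInt_mul_beta (β : ℝ) (hβ : 1 < β) {w : ℝ} (hw : w ∈ betaInt β) :
    β * w ∈ betaInt β := by
  obtain ⟨N, hIco, hT⟩ := hw
  have hβ0 : (0:ℝ) < β := lt_trans one_pos hβ
  refine ⟨N + 1, ?_, ?_⟩
  · have : |β * w| / β ^ (N+1) = |w| / β ^ N := by
      rw [abs_mul, abs_of_pos hβ0, pow_succ]
      field_simp
    rw [this]; exact hIco
  · have heq : |β * w| / β ^ (N+1) = |w| / β ^ N := by
      rw [abs_mul, abs_of_pos hβ0, pow_succ]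
      field_simp
    rw [heq, Function.iterate_succ_apply', hT, betaT_zero]

lemma betaInt_pow_mul (β : ℝ) (hβ : 1 < β) {w : ℝ} (hw : w ∈ betaInt β) (L : ℕ) :
    β ^ L * w ∈ betaInt β := by
  induction L with
  | zero => simpa using hw
  | succ m ih =>
    have := betaInt_mul_beta β hβ ih
    rw [show β * (β ^ m * w) = β ^ (m+1) * w by ring] at this
    exact this

/-- evaluation of an integer quadratic at x -/
def ev (x : ℝ) (c : ℤ × ℤ × ℤ) : ℝ := c.1 + c.2.1 * x + c.2.2 * x^2

/-- multiplication by the root, in coordinates, for root of X³ - aX² + bX + 1 -/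
def mul3 (a b : ℤ) (c : ℤ × ℤ × ℤ) : ℤ × ℤ × ℤ :=
  (-c.2.2, c.1 - b * c.2.2, c.2.1 + a * c.2.2)

lemma ev_add (x : ℝ) (c d : ℤ × ℤ × ℤ) : ev x (c + d) = ev x c + ev x d := by
  simp only [ev, Prod.fst_add, Prod.snd_add]
  push_cast
  ring

lemma ev_neg (x : ℝ) (c : ℤ × ℤ × ℤ) : ev x (-c) = - ev x c := by
  simp only [ev, Prod.fst_neg, Prod.snd_neg]
  push_cast
  ring

lemma ev_sub (x : ℝ) (c d : ℤ × ℤ × ℤ) : ev x (c - d) = ev x c - ev x d := by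
  rw [sub_eq_add_neg, ev_add, ev_neg, sub_eq_add_neg]

lemma ev_mul3 (a b : ℤ) (ρ : ℝ) (hρ : ρ^3 - (a:ℝ)*ρ^2 + (b:ℝ)*ρ + 1 = 0)
    (c : ℤ × ℤ × ℤ) : ev ρ (mul3 a b c) = ρ * ev ρ c := by
  simp only [ev, mul3]
  push_cast
  linear_combination (-(c.2.2 : ℝ)) * hρ

lemma ev_mul3_iter (a b : ℤ) (ρ : ℝ) (hρ : ρ^3 - (a:ℝ)*ρ^2 + (b:ℝ)*ρ + 1 = 0)
    (c : ℤ × ℤ × ℤ) (j : ℕ) : ev ρ ((mul3 a b)^[j] c) = ρ ^ j * ev ρ c := by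
  induction j with
  | zero => simp
  | succ m ih =>
    rw [Function.iterate_succ_apply', ev_mul3 a b ρ hρ, ih, pow_succ]
    ring

lemma ev_mul3_iter_bound (a b : ℤ) (ρ : ℝ) (hρ : ρ^3 - (a:ℝ)*ρ^2 + (b:ℝ)*ρ + 1 = 0)
    (hρ1 : |ρ| ≤ 1) (c : ℤ × ℤ × ℤ) (j : ℕ) {E : ℝ} (hE : |ev ρ c| ≤ E) :
    |ev ρ ((mul3 a b)^[j] c)| ≤ E := by
  rw [ev_mul3_iter a b ρ hρ, abs_mul, abs_pow]
  calc |ρ|^j * |ev ρ c| ≤ 1 * E := by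
        apply mul_le_mul (pow_le_one₀ (abs_nonneg ρ) hρ1) hE (abs_nonneg _) one_pos.le
    _ = E := one_mul E

/-- Main digit representation lemma: the digit part β^K u − T^[K] u is an
integer quadratic in β whose conjugate values are small. -/
lemma digitrep (a b : ℤ) (β γ δ : ℝ) (hβ : 1 < β) (hβa : β < a)
    (hβroot : β^3 - (a:ℝ)*β^2 + (b:ℝ)*β + 1 = 0)
    (hγ : γ^3 - (a:ℝ)*γ^2 + (b:ℝ)*γ + 1 = 0) (hδ : δ^3 - (a:ℝ)*δ^2 + (b:ℝ)*δ + 1 = 0)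
    {θ : ℝ} (hγθ : |γ| ≤ θ) (hδθ : |δ| ≤ θ) (hθ1 : θ < 1) (hθ0 : 0 ≤ θ)
    {D : ℝ} (hD : (1 - θ) * D = a) (u : ℝ) (hu : u ∈ Set.Ico (0:ℝ) 1) (K : ℕ) :
    ∃ c : ℤ × ℤ × ℤ, ev β c = β ^ K * u - (betaT β)^[K] u ∧
      |ev γ c| ≤ D ∧ |ev δ c| ≤ D := by
  have ha : (1:ℝ) < a := lt_trans hβ hβa
  have hD0 : 0 ≤ D := by nlinarith
  induction K with
  | zero => exact ⟨0, by simp [ev], by simp [ev]; exact hD0, by simp [ev]; exact hD0⟩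
  | succ K ih =>
    obtain ⟨c, hc, hcγ, hcδ⟩ := ih
    set w := (betaT β)^[K] u with hw
    have hwmem : w ∈ Set.Ico (0:ℝ) 1 := iterT_mem β hu K
    set d : ℤ := ⌊β * w⌋ with hd
    have hd0 : 0 ≤ d := Int.floor_nonneg.mpr (by nlinarith [hwmem.1])
    have hdle : (d:ℝ) ≤ (a:ℝ) - 1 := by
      have h1 : (d:ℝ) ≤ β * w := Int.floor_le _
      have h2 : β * w < β := by nlinarith [hwmem.2, hwmem.1]
      have : (d:ℝ) < (a:ℝ) := lt_trans (lt_of_le_of_lt h1 h2) hβa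
      have : d < a := by exact_mod_cast this
      have : d ≤ a - 1 := by omega
      calc (d:ℝ) ≤ ((a - 1 : ℤ) : ℝ) := by exact_mod_cast this
        _ = (a:ℝ) - 1 := by push_cast; ring
    have hdev : ∀ x : ℝ, ev x (d, 0, 0) = (d:ℝ) := by intro x; simp [ev]
    have hbound : ∀ (ρ : ℝ), ρ^3 - (a:ℝ)*ρ^2 + (b:ℝ)*ρ + 1 = 0 → |ρ| ≤ θ →
        |ev ρ c| ≤ D → |ev ρ (mul3 a b c + (d, 0, 0))| ≤ D := by
      intro ρ hρ hρθ hcρ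
      rw [ev_add, ev_mul3 a b ρ hρ, hdev]
      have h1 : |ρ * ev ρ c + (d:ℝ)| ≤ |ρ| * |ev ρ c| + |(d:ℝ)| := by
        calc |ρ * ev ρ c + (d:ℝ)| ≤ |ρ * ev ρ c| + |(d:ℝ)| := abs_add_le _ _
          _ = |ρ| * |ev ρ c| + |(d:ℝ)| := by rw [abs_mul]
      have h2 : |ρ| * |ev ρ c| ≤ θ * D :=
        mul_le_mul hρθ hcρ (abs_nonneg _) hθ0
      have h3 : |(d:ℝ)| ≤ (a:ℝ) - 1 := by
        rw [abs_of_nonneg (by exact_mod_cast hd0 : (0:ℝ) ≤ (d:ℝ))]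
        exact hdle
      nlinarith
    refine ⟨mul3 a b c + (d, 0, 0), ?_, hbound γ hγ hγθ hcγ, hbound δ hδ hδθ hcδ⟩
    · rw [ev_add, ev_mul3 a b β hβroot, hdev, hc]
      rw [Function.iterate_succ_apply', ← hw]
      have : betaT β w = β * w - (d:ℝ) := rfl
      rw [this, pow_succ]
      ring

/-- every β-integer is an integer quadratic in β with small conjugates -/
lemma betaInt_rep (a b : ℤ) (β γ δ : ℝ) (hβ : 1 < β) (hβa : β < a)
    (hβroot : β^3 - (a:ℝ)*β^2 + (b:ℝ)*β + 1 = 0)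
    (hγ : γ^3 - (a:ℝ)*γ^2 + (b:ℝ)*γ + 1 = 0) (hδ : δ^3 - (a:ℝ)*δ^2 + (b:ℝ)*δ + 1 = 0)
    {θ : ℝ} (hγθ : |γ| ≤ θ) (hδθ : |δ| ≤ θ) (hθ1 : θ < 1) (hθ0 : 0 ≤ θ)
    {D : ℝ} (hD : (1 - θ) * D = a) {x : ℝ} (hx : x ∈ betaInt β) :
    ∃ c : ℤ × ℤ × ℤ, ev β c = x ∧ |ev γ c| ≤ D ∧ |ev δ c| ≤ D := by
  obtain ⟨N, hIco, hT⟩ := hx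
  obtain ⟨c, hc, hcγ, hcδ⟩ := digitrep a b β γ δ hβ hβa hβroot hγ hδ hγθ hδθ hθ1 hθ0 hD
    _ hIco N
  rw [hT, sub_zero] at hc
  have hβ0 : (0:ℝ) < β := lt_trans one_pos hβ
  have hcabs : ev β c = |x| := by
    rw [hc]
    field_simp
  rcases abs_cases x with ⟨h1, _⟩ | ⟨h1, _⟩
  · exact ⟨c, by rw [hcabs, h1], hcγ, hcδ⟩
  · refine ⟨-c, ?_, ?_, ?_⟩
    · rw [ev_neg, hcabs, h1]; ring
    · rw [ev_neg, abs_neg]; exact hcγ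
    · rw [ev_neg, abs_neg]; exact hcδ

/-- |x + y| for two β-integers -/
lemma sum_rep (a b : ℤ) (β γ δ : ℝ) (hβ : 1 < β) (hβa : β < a)
    (hβroot : β^3 - (a:ℝ)*β^2 + (b:ℝ)*β + 1 = 0)
    (hγ : γ^3 - (a:ℝ)*γ^2 + (b:ℝ)*γ + 1 = 0) (hδ : δ^3 - (a:ℝ)*δ^2 + (b:ℝ)*δ + 1 = 0)
    {θ : ℝ} (hγθ : |γ| ≤ θ) (hδθ : |δ| ≤ θ) (hθ1 : θ < 1) (hθ0 : 0 ≤ θ)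
    {D : ℝ} (hD : (1 - θ) * D = a) {x y : ℝ} (hx : x ∈ betaInt β) (hy : y ∈ betaInt β) :
    ∃ c : ℤ × ℤ × ℤ, ev β c = |x + y| ∧ |ev γ c| ≤ 2*D ∧ |ev δ c| ≤ 2*D := by
  obtain ⟨cx, hcx, hcxγ, hcxδ⟩ := betaInt_rep a b β γ δ hβ hβa hβroot hγ hδ hγθ hδθ hθ1 hθ0 hD hx
  obtain ⟨cy, hcy, hcyγ, hcyδ⟩ := betaInt_rep a b β γ δ hβ hβa hβroot hγ hδ hγθ hδθ hθ1 hθ0 hD hy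
  have key : ∀ (ρ : ℝ) (E : ℝ), |ev ρ cx| ≤ E → |ev ρ cy| ≤ E → |ev ρ (cx + cy)| ≤ 2*E := by
    intro ρ E h1 h2
    rw [ev_add]
    calc |ev ρ cx + ev ρ cy| ≤ |ev ρ cx| + |ev ρ cy| := abs_add_le _ _
      _ ≤ 2*E := by linarith
  rcases abs_cases (x + y) with ⟨h1, _⟩ | ⟨h1, _⟩
  · exact ⟨cx + cy, by rw [ev_add, hcx, hcy, h1], key γ D hcxγ hcyγ, key δ D hcxδ hcyδ⟩
  · refine ⟨-(cx + cy), ?_, ?_, ?_⟩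
    · rw [ev_neg, ev_add, hcx, hcy, h1]
    · rw [ev_neg, abs_neg]; exact key γ D hcxγ hcyγ
    · rw [ev_neg, abs_neg]; exact key δ D hcxδ hcyδ

lemma good_finite (β γ δ : ℝ) (hβγ : γ < β) (hβδ : δ < β) (hγδ : δ < γ) (C : ℝ) :
    Set.Finite {w : ℝ | w ∈ Set.Ico (0:ℝ) 1 ∧
      ∃ c : ℤ × ℤ × ℤ, ev β c = w ∧ |ev γ c| ≤ C ∧ |ev δ c| ≤ C} := by
  set V : ℝ := (β - γ) * (β - δ) * (γ - δ) with hV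
  have hV0 : 0 < V := by
    apply mul_pos (mul_pos (by linarith) (by linarith)) (by linarith)
  set C' : ℝ := max C 1 with hC'
  have hC'1 : (1:ℝ) ≤ C' := le_max_right _ _
  have hC'0 : (0:ℝ) ≤ C' := le_trans zero_le_one hC'1
  set W : ℝ := (|γ - δ| + |β - δ| + |β - γ|) + (|δ^2 - γ^2| + |δ^2 - β^2| + |γ^2 - β^2|)
      + (|γ*δ*(γ - δ)| + |β*δ*(β - δ)| + |β*γ*(β - γ)|) with hW
  set M : ℤ := ⌈C' * W / V⌉ with hM
  have tri : ∀ A B E p q r : ℝ, |A| ≤ C' → |B| ≤ C' → |E| ≤ C' →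
      |A * p - B * q + E * r| ≤ C' * (|p| + |q| + |r|) := by
    intro A B E p q r hA hB hE
    calc |A * p - B * q + E * r| ≤ |A * p - B * q| + |E * r| := abs_add_le _ _
      _ ≤ |A * p| + |B * q| + |E * r| := by linarith [abs_sub (A*p) (B*q)]
      _ ≤ C' * |p| + C' * |q| + C' * |r| := by
          rw [abs_mul, abs_mul, abs_mul]
          have h1 := mul_le_mul_of_nonneg_right hA (abs_nonneg p)
          have h2 := mul_le_mul_of_nonneg_right hB (abs_nonneg q)
          have h3 := mul_le_mul_of_nonneg_right hE (abs_nonneg r)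
          linarith
      _ = C' * (|p| + |q| + |r|) := by ring
  have coeff_bound : ∀ c : ℤ × ℤ × ℤ, |ev β c| ≤ 1 → |ev γ c| ≤ C → |ev δ c| ≤ C →
      (|c.1| ≤ M ∧ |c.2.1| ≤ M ∧ |c.2.2| ≤ M) := by
    intro c hb hg hd
    have hb' : |ev β c| ≤ C' := le_trans hb hC'1
    have hg' : |ev γ c| ≤ C' := le_trans hg (le_max_left _ _)
    have hd' : |ev δ c| ≤ C' := le_trans hd (le_max_left _ _)
    have main : ∀ (z : ℤ) (p q r : ℝ),
        ((z:ℝ) * V = ev β c * p - ev γ c * q + ev δ c * r) → (|p| + |q| + |r| ≤ W) →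
        |z| ≤ M := by
      intro z p q r hid hpqr
      have h1 : |(z:ℝ)| * V ≤ C' * W := by
        calc |(z:ℝ)| * V = |(z:ℝ) * V| := by rw [abs_mul, abs_of_pos hV0]
          _ = |ev β c * p - ev γ c * q + ev δ c * r| := by rw [hid]
          _ ≤ C' * (|p| + |q| + |r|) := tri _ _ _ _ _ _ hb' hg' hd'
          _ ≤ C' * W := mul_le_mul_of_nonneg_left hpqr hC'0
      have h2 : |(z:ℝ)| ≤ (M:ℝ) :=
        le_trans ((le_div_iff₀ hV0).mpr h1) (Int.le_ceil _)
      exact_mod_cast h2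
    have nn : ∀ t : ℝ, 0 ≤ |t| := abs_nonneg
    refine ⟨main _ (γ*δ*(γ - δ)) (β*δ*(β - δ)) (β*γ*(β - γ)) (by simp only [ev, hV]; ring)
        (by linarith [nn (γ-δ), nn (β-δ), nn (β-γ), nn (δ^2-γ^2), nn (δ^2-β^2), nn (γ^2-β^2)]),
      main _ (δ^2 - γ^2) (δ^2 - β^2) (γ^2 - β^2) (by simp only [ev, hV]; ring)
        (by linarith [nn (γ-δ), nn (β-δ), nn (β-γ), nn (γ*δ*(γ-δ)), nn (β*δ*(β-δ)), nn (β*γ*(β-γ))]),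
      main _ (γ - δ) (β - δ) (β - γ) (by simp only [ev, hV]; ring)
        (by linarith [nn (γ*δ*(γ-δ)), nn (β*δ*(β-δ)), nn (β*γ*(β-γ)), nn (δ^2-γ^2), nn (δ^2-β^2), nn (γ^2-β^2)])⟩
  apply Set.Finite.subset (Set.Finite.image (fun c => ev β c)
    (Finset.finite_toSet (Finset.Icc (-M) M ×ˢ Finset.Icc (-M) M ×ˢ Finset.Icc (-M) M)))
  rintro w ⟨hw1, c, hc, hcg, hcd⟩
  have hb : |ev β c| ≤ 1 := by rw [hc, abs_of_nonneg hw1.1]; exact hw1.2.le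
  obtain ⟨h0, h1, h2⟩ := coeff_bound c hb hcg hcd
  refine ⟨c, ?_, hc⟩
  simp only [Finset.coe_product, Set.mem_prod, Finset.mem_coe, Finset.mem_Icc]
  rw [abs_le] at h0 h1 h2
  exact ⟨⟨h0.1, h0.2⟩, ⟨h1.1, h1.2⟩, ⟨h2.1, h2.2⟩⟩

set_option maxHeartbeats 1000000 in

lemma roots_setup (a b : ℤ) (hb0 : 0 ≤ b) (hba : b ≤ a - 3) (β : ℝ) (hβ : 1 < β)
    (hroot : β ^ 3 - (a : ℝ) * β ^ 2 + (b : ℝ) * β + 1 = 0) :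
    ∃ γ δ : ℝ,
      (γ^3 - (a:ℝ)*γ^2 + (b:ℝ)*γ + 1 = 0) ∧ (δ^3 - (a:ℝ)*δ^2 + (b:ℝ)*δ + 1 = 0) ∧
      0 < γ ∧ γ < 1 ∧ -1 < δ ∧ δ < 0 ∧ (a:ℝ) - 1 < β ∧ β < a ∧ 3 ≤ (a:ℝ) := by
  have ha3 : (3:ℤ) ≤ a := by omega
  have ha3' : (3:ℝ) ≤ (a:ℝ) := by exact_mod_cast ha3
  have hβ0 : (0:ℝ) < β := by linarith
  have hb0' : (0:ℝ) ≤ (b:ℝ) := by exact_mod_cast hb0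
  have hba' : (b:ℝ) ≤ (a:ℝ) - 3 := by
    have : (b:ℝ) ≤ ((a - 3 : ℤ) : ℝ) := by exact_mod_cast hba
    push_cast at this; linarith
  have hβa : β < a := by nlinarith
  have hβa1 : (a:ℝ) - 1 < β := by nlinarith [sq_nonneg β, sq_nonneg (β - 1)]
  have hsarg : (0:ℝ) ≤ ((a:ℝ) - β)^2 + 4/β := by positivity
  obtain ⟨s, hs0, hs2⟩ : ∃ s : ℝ, 0 ≤ s ∧ s^2 = ((a:ℝ) - β)^2 + 4/β :=
    ⟨Real.sqrt (((a:ℝ) - β)^2 + 4/β), Real.sqrt_nonneg _, Real.sq_sqrt hsarg⟩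
  have haβ0 : 0 < (a:ℝ) - β := by linarith
  have hs2' : β * s^2 = β * ((a:ℝ) - β)^2 + 4 := by
    rw [hs2]; field_simp
  have cubic : ∀ g : ℝ, β*g^2 - β*((a:ℝ)-β)*g - 1 = 0 →
      g^3 - (a:ℝ)*g^2 + (b:ℝ)*g + 1 = 0 := by
    intro g hq1
    have key : β * (g^3 - (a:ℝ)*g^2 + (b:ℝ)*g + 1) = 0 := by
      linear_combination (g - β) * hq1 + g * hroot
    exact (mul_eq_zero.mp key).resolve_left (ne_of_gt hβ0)
  have hγq : β*(((a - β) + s)/2)^2 - β*((a:ℝ)-β)*(((a - β) + s)/2) - 1 = 0 := by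
    linear_combination hs2' / 4
  have hδq : β*(((a - β) - s)/2)^2 - β*((a:ℝ)-β)*(((a - β) - s)/2) - 1 = 0 := by
    linear_combination hs2' / 4
  refine ⟨((a - β) + s)/2, ((a - β) - s)/2, cubic _ hγq, cubic _ hδq, ?_, ?_, ?_, ?_,
    hβa1, hβa, ha3'⟩
  · -- 0 < γ
    linarith
  · -- γ < 1, i.e. s < 2 - (a - β)
    have hstep : (b:ℝ)*(β^2 - β) ≤ β^3 - 3*β^2 + 1 := by nlinarith
    have hkey2 : (b:ℝ)*β + β + 1 < β^2 := by nlinarith [hstep, hβ, sq_nonneg β]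
    have hkeyβ : (a:ℝ)*β^2 - β^3 + β < β^2 := by nlinarith [hkey2, hroot]
    have hkey : (a:ℝ)*β - β^2 + 1 < β := by nlinarith [hkeyβ, hβ0]
    have h1 : 4/β < 4 - 4*((a:ℝ) - β) := by
      rw [div_lt_iff₀ hβ0]; nlinarith [hkey]
    have hst : s^2 < (2 - ((a:ℝ) - β))^2 := by nlinarith [hs2, h1]
    have h2 : 0 < 2 - ((a:ℝ) - β) := by linarith
    nlinarith [hst, hs0, h2]
  · -- -1 < δ, i.e. s < (a - β) + 2
    have h1 : 4/β < 4*((a:ℝ) - β) + 4 := by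
      rw [div_lt_iff₀ hβ0]; nlinarith [haβ0, hβ]
    have hst : s^2 < (((a:ℝ) - β) + 2)^2 := by nlinarith [hs2, h1]
    nlinarith [hst, hs0, haβ0]
  · -- δ < 0, i.e. a - β < s
    have h4β : 0 < 4/β := by positivity
    nlinarith [hs2, hs0, h4β, haβ0]

lemma witness_facts (a b : ℤ) (β : ℝ) (hβ : 1 < β)
    (hroot : β ^ 3 - (a : ℝ) * β ^ 2 + (b : ℝ) * β + 1 = 0)
    (hβa1 : (a:ℝ) - 1 < β) (hβa : β < a) (ha3 : 3 ≤ (a:ℝ)) (hb0 : (0:ℝ) ≤ b) :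
    ((a:ℝ) - 1) ∈ betaInt β ∧ (1:ℝ) ∈ betaInt β ∧ (a:ℝ) ∈ finBeta β ∧
    (a:ℝ) ∉ betaInt β ∧ β * (a:ℝ) ∉ betaInt β := by
  have hβ0 : (0:ℝ) < β := by linarith
  have hβne : β ≠ 0 := ne_of_gt hβ0
  have ha0 : (0:ℝ) < a := by linarith
  have haβ2 : (a:ℝ) < β^2 := by nlinarith
  have hinv : (0:ℝ) < 1/β := by positivity
  have hinv1 : 1/β < 1 := by rw [div_lt_one hβ0]; exact hβ
  -- the four T-steps starting from a/β²
  have c1 : betaT β ((a:ℝ)/β^2) = (a:ℝ)/β - 1 := by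
    have harg : β * ((a:ℝ)/β^2) = (a:ℝ)/β := by field_simp
    have hfl : ⌊(a:ℝ)/β⌋ = 1 := by
      rw [Int.floor_eq_iff]
      constructor
      · push_cast; rw [le_div_iff₀ hβ0]; linarith
      · push_cast; rw [div_lt_iff₀ hβ0]; linarith
    simp only [betaT, harg, hfl]
    push_cast; ring
  have c2 : betaT β ((a:ℝ)/β - 1) = (a:ℝ) - β := by
    have harg : β * ((a:ℝ)/β - 1) = (a:ℝ) - β := by field_simp
    have hfl : ⌊(a:ℝ) - β⌋ = 0 := by
      rw [Int.floor_eq_iff]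
      constructor
      · push_cast; linarith
      · push_cast; linarith
    simp only [betaT, harg, hfl]
    push_cast; ring
  have hab : (a:ℝ)*β - β^2 = (b:ℝ) + 1/β := by
    field_simp
    linear_combination -hroot
  have c3 : betaT β ((a:ℝ) - β) = 1/β := by
    have harg : β * ((a:ℝ) - β) = (b:ℝ) + 1/β := by rw [← hab]; ring
    have hfl : ⌊(b:ℝ) + 1/β⌋ = b := by
      rw [show (b:ℝ) + 1/β = 1/β + (b:ℝ) by ring, Int.floor_add_intCast]
      rw [Int.floor_eq_zero_iff.mpr ⟨le_of_lt hinv, hinv1⟩]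
      ring
    simp only [betaT, harg, hfl]
    push_cast; ring
  have c4 : betaT β (1/β) = 0 := by
    have harg : β * (1/β) = (1:ℝ) := by field_simp
    have hfl : ⌊(1:ℝ)⌋ = 1 := by norm_num
    simp only [betaT, harg, hfl]
    norm_num
  have hu0 : (a:ℝ)/β^2 ∈ Set.Ico (0:ℝ) 1 := by
    constructor
    · positivity
    · rw [div_lt_one (by positivity)]; exact haβ2
  have it2 : (betaT β)^[2] ((a:ℝ)/β^2) = (a:ℝ) - β := by
    rw [show (2:ℕ) = 1 + 1 from rfl, Function.iterate_add_apply]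
    simp only [Function.iterate_one, c1, c2]
  have it3 : (betaT β)^[3] ((a:ℝ)/β^2) = 1/β := by
    rw [show (3:ℕ) = 1 + 2 from rfl, Function.iterate_add_apply]
    rw [it2]  -- careful: iterate_add_apply f 1 2 x = f^[1] (f^[2] x)
    simp only [Function.iterate_one, c3]
  have it4 : (betaT β)^[4] ((a:ℝ)/β^2) = 0 := by
    rw [show (4:ℕ) = 1 + 3 from rfl, Function.iterate_add_apply, it3]
    simp only [Function.iterate_one, c4]
  refine ⟨?_, ?_, ?_, ?_, ?_⟩
  · -- a - 1 ∈ betaInt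
    refine ⟨1, ?_, ?_⟩
    · rw [abs_of_nonneg (by linarith), pow_one]
      constructor
      · exact div_nonneg (by linarith) hβ0.le
      · rw [div_lt_one hβ0]; linarith
    · rw [abs_of_nonneg (by linarith), pow_one, Function.iterate_one]
      have harg : β * (((a:ℝ) - 1) / β) = (a:ℝ) - 1 := by field_simp
      have hfl : ⌊(a:ℝ) - 1⌋ = a - 1 := by
        rw [show (a:ℝ) - 1 = ((a - 1 : ℤ) : ℝ) by push_cast; ring, Int.floor_intCast]
      simp only [betaT, harg, hfl]
      push_cast; ring
  · -- 1 ∈ betaInt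
    refine ⟨1, ?_, ?_⟩
    · rw [abs_one, pow_one]
      exact ⟨by positivity, by rw [div_lt_one hβ0]; exact hβ⟩
    · rw [abs_one, pow_one, Function.iterate_one, show (1:ℝ)/β = 1/β from rfl, c4]
  · -- a ∈ finBeta
    refine ⟨2, 4, ?_, ?_⟩
    · rw [abs_of_nonneg (le_of_lt ha0)]; exact hu0
    · rw [abs_of_nonneg (le_of_lt ha0)]; exact it4
  · -- a ∉ betaInt
    apply not_mem_betaInt β hβ _ 2 ha0
    · rw [pow_two]; nlinarith
    · exact haβ2
    · rw [it2]; intro h; linarith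
  · -- β * a ∉ betaInt
    apply not_mem_betaInt β hβ _ 3 (by positivity)
    · rw [pow_succ, pow_two]; nlinarith
    · rw [pow_succ]; nlinarith
    · have : β * (a:ℝ) / β ^ 3 = (a:ℝ)/β^2 := by field_simp
      rw [this, it3]
      positivity

lemma exists_L (a b : ℤ) (β γ δ : ℝ) (hβ : 1 < β)
    (hroot : β ^ 3 - (a : ℝ) * β ^ 2 + (b : ℝ) * β + 1 = 0)
    (hγroot : γ^3 - (a:ℝ)*γ^2 + (b:ℝ)*γ + 1 = 0)
    (hδroot : δ^3 - (a:ℝ)*δ^2 + (b:ℝ)*δ + 1 = 0)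
    (hγ0 : 0 < γ) (hγ1 : γ < 1) (hδ0 : -1 < δ) (hδ1 : δ < 0)
    (hβa1 : (a:ℝ) - 1 < β) (hβa : β < a) (ha3 : 3 ≤ (a:ℝ)) :
    ∃ L : ℕ, ∀ x ∈ betaInt β, ∀ y ∈ betaInt β,
      x + y ∈ finBeta β → β ^ L * (x + y) ∈ betaInt β := by
  classical
  have hβ0 : (0:ℝ) < β := by linarith
  set θ : ℝ := max γ (-δ) with hθ
  have hγθ : |γ| ≤ θ := by rw [abs_of_pos hγ0]; exact le_max_left _ _
  have hδθ : |δ| ≤ θ := by rw [abs_of_neg hδ1]; exact le_max_right _ _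
  have hθ1 : θ < 1 := max_lt hγ1 (by linarith)
  have hθ0 : 0 ≤ θ := le_trans (le_of_lt hγ0) (le_max_left _ _)
  have hθne : 1 - θ ≠ 0 := by intro h; rw [sub_eq_zero] at h; exact absurd h.symm (ne_of_lt hθ1)
  set D : ℝ := (a:ℝ) / (1 - θ) with hDdef
  have hD : (1 - θ) * D = (a:ℝ) := by
    rw [hDdef, mul_div_cancel₀ _ hθne]
  have hγ1' : |γ| ≤ 1 := by rw [abs_of_pos hγ0]; linarith
  have hδ1' : |δ| ≤ 1 := by rw [abs_of_neg hδ1]; linarith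
  set C : ℝ := 3 * D with hC
  have hG := good_finite β γ δ (by linarith) (by linarith) (by linarith) C
  refine ⟨hG.toFinset.card, ?_⟩
  intro x hx y hy hsum
  obtain ⟨N, n0, hIco, hTn⟩ := hsum
  set u : ℝ := |x + y| / β ^ N with hu
  set L : ℕ := hG.toFinset.card with hL
  have hP : ∃ m, (betaT β)^[m] u = 0 := ⟨n0, hTn⟩
  set n : ℕ := Nat.find hP with hn
  have hzero : (betaT β)^[n] u = 0 := Nat.find_spec hP
  have hmin : ∀ m, m < n → (betaT β)^[m] u ≠ 0 := fun m hm => Nat.find_min hP hm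
  -- representation of all tails beyond N
  obtain ⟨cz, hcz, hczγ, hczδ⟩ := sum_rep a b β γ δ hβ hβa hroot hγroot hδroot
    hγθ hδθ hθ1 hθ0 hD hx hy
  have tail_mem : ∀ k, N ≤ k →
      (betaT β)^[k] u ∈ {w : ℝ | w ∈ Set.Ico (0:ℝ) 1 ∧
        ∃ c : ℤ × ℤ × ℤ, ev β c = w ∧ |ev γ c| ≤ C ∧ |ev δ c| ≤ C} := by
    intro k hk
    refine ⟨iterT_mem β hIco k, ?_⟩
    obtain ⟨c1, hc1, hc1γ, hc1δ⟩ := digitrep a b β γ δ hβ hβa hroot hγroot hδroot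
      hγθ hδθ hθ1 hθ0 hD u hIco k
    refine ⟨(mul3 a b)^[k - N] cz - c1, ?_, ?_, ?_⟩
    · rw [ev_sub, ev_mul3_iter a b β hroot, hcz, hc1]
      have hpow : β ^ (k - N) * |x + y| = β ^ k * u := by
        rw [hu]
        rw [show k = (k - N) + N by omega, pow_add]
        field_simp
        ring
        simp
      rw [hpow]; ring
    · have h1 := ev_mul3_iter_bound a b γ hγroot hγ1' cz (k - N) hczγ
      rw [ev_sub]
      calc |ev γ ((mul3 a b)^[k-N] cz) - ev γ c1|
          ≤ |ev γ ((mul3 a b)^[k-N] cz)| + |ev γ c1| := abs_sub _ _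
        _ ≤ 2*D + D := add_le_add h1 hc1γ
        _ = C := by rw [hC]; ring
    · have h1 := ev_mul3_iter_bound a b δ hδroot hδ1' cz (k - N) hczδ
      rw [ev_sub]
      calc |ev δ ((mul3 a b)^[k-N] cz) - ev δ c1|
          ≤ |ev δ ((mul3 a b)^[k-N] cz)| + |ev δ c1| := abs_sub _ _
        _ ≤ 2*D + D := add_le_add h1 hc1δ
        _ = C := by rw [hC]; ring
  -- injectivity of tails
  have hinj : Set.InjOn (fun k => (betaT β)^[k] u) (Finset.Ico N n) := by
    have key : ∀ i j : ℕ, N ≤ i → i < j → j < n →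
        (betaT β)^[i] u ≠ (betaT β)^[j] u := by
      intro i j hNi hij hjn heq
      have h1 : (betaT β)^[n - j + i] u = 0 := by
        rw [Function.iterate_add_apply, heq, ← Function.iterate_add_apply]
        rw [show n - j + j = n by omega]
        exact hzero
      exact hmin (n - j + i) (by omega) h1
    intro i hi j hj heq
    simp only [Finset.coe_Ico, Set.mem_Ico] at hi hj
    rcases lt_trichotomy i j with h | h | h
    · exact absurd heq (key i j hi.1 h hj.2)
    · exact h
    · exact absurd heq.symm (key j i hj.1 h hi.2)
  have hcard : n - N ≤ L := by
    have := Finset.card_le_card_of_injOn (t := hG.toFinset) (fun k => (betaT β)^[k] u)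
      (fun k hk => by
        rw [Finset.mem_coe, Set.Finite.mem_toFinset]
        exact tail_mem k (Finset.mem_Ico.mp hk).1) hinj
    rwa [Nat.card_Ico] at this
  have hnNL : n ≤ N + L := by omega
  -- conclude
  refine ⟨N + L, ?_, ?_⟩
  · have habs : |β ^ L * (x + y)| / β ^ (N + L) = u := by
      rw [abs_mul, abs_of_pos (pow_pos hβ0 L), hu, pow_add]
      field_simp
    rw [habs]; exact hIco
  · have habs : |β ^ L * (x + y)| / β ^ (N + L) = u := by
      rw [abs_mul, abs_of_pos (pow_pos hβ0 L), hu, pow_add]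
      field_simp
    rw [habs, show N + L = (N + L - n) + n by omega, Function.iterate_add_apply,
      hzero, iterT_zero]

theorem stmt16 (a b : ℤ) (hb0 : 0 ≤ b) (hba : b ≤ a - 3) (β : ℝ) (hβ : 1 < β)
    (hroot : β ^ 3 - (a : ℝ) * β ^ 2 + (b : ℝ) * β + 1 = 0) :
    2 ≤ Lplus β ∧
    ∃ x ∈ betaInt β, ∃ y ∈ betaInt β,
      x + y ∈ finBeta β ∧ β * (x + y) ∉ betaInt β := by
  obtain ⟨γ, δ, hγroot, hδroot, hγ0, hγ1, hδ0, hδ1, hβa1, hβa, ha3⟩ :=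
    roots_setup a b hb0 hba β hβ hroot
  have hb0' : (0:ℝ) ≤ (b:ℝ) := by exact_mod_cast hb0
  obtain ⟨hw1, hw2, hw3, hw4, hw5⟩ := witness_facts a b β hβ hroot hβa1 hβa ha3 hb0'
  obtain ⟨L, hL⟩ := exists_L a b β γ δ hβ hroot hγroot hδroot hγ0 hγ1 hδ0 hδ1 hβa1 hβa ha3
  have hxy : ((a:ℝ) - 1) + 1 = (a:ℝ) := by ring
  constructor
  · rw [Lplus]
    have hmem : L ∈ {L : ℕ | ∀ x ∈ betaInt β, ∀ y ∈ betaInt β,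
        x + y ∈ finBeta β → β ^ L * (x + y) ∈ betaInt β} := hL
    have hS := Nat.sInf_mem (⟨L, hmem⟩ : Set.Nonempty _)
    by_contra hlt
    push_neg at hlt
    have happ := hS ((a:ℝ) - 1) hw1 1 hw2 (by rw [hxy]; exact hw3)
    rw [hxy] at happ
    have h01 : sInf {L : ℕ | ∀ x ∈ betaInt β, ∀ y ∈ betaInt β,
        x + y ∈ finBeta β → β ^ L * (x + y) ∈ betaInt β} = 0 ∨
        sInf {L : ℕ | ∀ x ∈ betaInt β, ∀ y ∈ betaInt β,
        x + y ∈ finBeta β → β ^ L * (x + y) ∈ betaInt β} = 1 := by omega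
    rcases h01 with h0 | h1
    · rw [h0, pow_zero, one_mul] at happ
      exact hw4 happ
    · rw [h1, pow_one] at happ
      exact hw5 happ
  · exact ⟨(a:ℝ) - 1, hw1, 1, hw2, by rw [hxy]; exact hw3, by rw [hxy]; exact hw5⟩
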